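/- The matching polytope P_M(n) is contained in Q_ε(n), and Q_ε(n) is contained in (1+ε)·P_M(n), for all 0 < ε ≤ 1. In particular, for any vector x satisfying all degree constraints, nonnegativity, and odd-set constraints for odd sets U with |U| ≤ (1+ε)/ε, and any odd set U with |U| > (1+ε)/ε, one has Σ_{e ⊆ U} x_e ≤ (1+ε)(|U|-1)/2. -/

import Mathlib

/-- The set of edges of the complete graph `K_n` (2-element vertex subsets) incident
on the vertex `v`. -/
def edgesIncident (n : ℕ) (v : Fin n) : Finset (Finset (Fin n)) :=
  Finset.univ.filter (fun e => e.card = 2 ∧ v ∈ e)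

/-- The set of edges of `K_n` with both endpoints inside `U`. -/
def edgesInside (n : ℕ) (U : Finset (Fin n)) : Finset (Finset (Fin n)) :=
  Finset.univ.filter (fun e => e.card = 2 ∧ e ⊆ U)

/-- Membership in the matching polytope `P_M(n)`, via Edmonds' description:
nonnegativity, degree constraints, and odd-set constraints for all odd sets. -/
def memPM (n : ℕ) (x : Finset (Fin n) → ℝ) : Prop :=
  (∀ e, 0 ≤ x e) ∧
  (∀ v : Fin n, ∑ e ∈ edgesIncident n v, x e ≤ 1) ∧
  (∀ U : Finset (Fin n), Odd U.card →
      ∑ e ∈ edgesInside n U, x e ≤ ((U.card : ℝ) - 1) / 2)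

/-- Membership in the relaxation `Q_ε(n)`: nonnegativity, degree constraints, and
odd-set constraints only for odd sets `U` with `|U| ≤ (1+ε)/ε`. -/
def memQ (n : ℕ) (ε : ℝ) (x : Finset (Fin n) → ℝ) : Prop :=
  (∀ e, 0 ≤ x e) ∧
  (∀ v : Fin n, ∑ e ∈ edgesIncident n v, x e ≤ 1) ∧
  (∀ U : Finset (Fin n), Odd U.card → (U.card : ℝ) ≤ (1 + ε) / ε →
      ∑ e ∈ edgesInside n U, x e ≤ ((U.card : ℝ) - 1) / 2)


lemma double_count (n : ℕ) (x : Finset (Fin n) → ℝ) (hx : ∀ e, 0 ≤ x e) (U : Finset (Fin n)) :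
    2 * ∑ e ∈ edgesInside n U, x e ≤ ∑ v ∈ U, ∑ e ∈ edgesIncident n v, x e := by
  classical
  set S : Finset (Finset (Fin n)) := Finset.univ.filter (fun e => e.card = 2) with hS
  have hInc : ∀ v : Fin n, edgesIncident n v = S.filter (fun e => v ∈ e) := by
    intro v; simp only [edgesIncident, hS, Finset.filter_filter]
  have hIns : edgesInside n U = S.filter (fun e => e ⊆ U) := by
    simp only [edgesInside, hS, Finset.filter_filter]
  have key : ∑ v ∈ U, ∑ e ∈ edgesIncident n v, x e
      = ∑ e ∈ S, ((U.filter (fun v => v ∈ e)).card : ℝ) * x e := by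
    calc ∑ v ∈ U, ∑ e ∈ edgesIncident n v, x e
        = ∑ v ∈ U, ∑ e ∈ S, if v ∈ e then x e else 0 := by
          refine Finset.sum_congr rfl fun v _ => ?_
          rw [hInc v, Finset.sum_filter]
      _ = ∑ e ∈ S, ∑ v ∈ U, if v ∈ e then x e else 0 := Finset.sum_comm
      _ = ∑ e ∈ S, ((U.filter (fun v => v ∈ e)).card : ℝ) * x e := by
          refine Finset.sum_congr rfl fun e _ => ?_
          rw [← Finset.sum_filter, Finset.sum_const, nsmul_eq_mul]
  rw [key, hIns, Finset.mul_sum]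
  have h1 : ∑ e ∈ S.filter (fun e => e ⊆ U), 2 * x e
      ≤ ∑ e ∈ S.filter (fun e => e ⊆ U), ((U.filter (fun v => v ∈ e)).card : ℝ) * x e := by
    refine Finset.sum_le_sum fun e he => ?_
    simp only [Finset.mem_filter, hS, Finset.mem_univ, true_and] at he
    have : U.filter (fun v => v ∈ e) = e := by
      ext v; simp only [Finset.mem_filter]
      exact ⟨fun h => h.2, fun h => ⟨he.2 h, h⟩⟩
    rw [this, he.1]; norm_num
  refine h1.trans (Finset.sum_le_sum_of_subset_of_nonneg (Finset.filter_subset _ _) ?_)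
  intro e _ _
  exact mul_nonneg (Nat.cast_nonneg _) (hx e)

/-- `P_M(n) ⊆ Q_ε(n) ⊆ (1+ε)·P_M(n)`: the second inclusion is expressed by saying
that `x/(1+ε)` satisfies all of Edmonds' constraints. -/
theorem stmt12 (n : ℕ) (ε : ℝ) (hε : 0 < ε) (hε1 : ε ≤ 1) :
    (∀ x : Finset (Fin n) → ℝ, memPM n x → memQ n ε x) ∧
    (∀ x : Finset (Fin n) → ℝ, memQ n ε x → memPM n (fun e => x e / (1 + ε))) := by

  have h1ε : (0:ℝ) < 1 + ε := by linarith
  constructor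
  · rintro x ⟨hnn, hdeg, hodd⟩
    exact ⟨hnn, hdeg, fun U hU _ => hodd U hU⟩
  · rintro x ⟨hnn, hdeg, hodd⟩
    refine ⟨fun e => div_nonneg (hnn e) h1ε.le, fun v => ?_, fun U hU => ?_⟩
    · rw [← Finset.sum_div, div_le_one h1ε]
      linarith [hdeg v, Finset.sum_nonneg (fun e (_ : e ∈ edgesIncident n v) => hnn e)]
    · rw [← Finset.sum_div, div_le_div_iff₀ h1ε (by norm_num : (0:ℝ) < 2)]
      by_cases hsmall : (U.card : ℝ) ≤ (1 + ε) / ε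
      · have := hodd U hU hsmall
        have hc1 : (1:ℝ) ≤ (U.card : ℝ) := by
          exact_mod_cast Nat.one_le_iff_ne_zero.mpr (by rintro h; simp [h] at hU)
        nlinarith [Finset.sum_nonneg (fun e (_ : e ∈ edgesInside n U) => hnn e)]
      · push_neg at hsmall
        have hdc := double_count n x hnn U
        have hdegsum : ∑ v ∈ U, ∑ e ∈ edgesIncident n v, x e ≤ (U.card : ℝ) := by
          calc ∑ v ∈ U, ∑ e ∈ edgesIncident n v, x e ≤ ∑ _v ∈ U, (1:ℝ) :=
              Finset.sum_le_sum fun v _ => hdeg v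
            _ = (U.card : ℝ) := by simp
        have hε' : (1 + ε) / ε < (U.card : ℝ) := hsmall
        have : 1 + ε < ε * (U.card : ℝ) := by
          rw [div_lt_iff₀ hε] at hε'; linarith
        nlinarith
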